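/- Let X = U * Matrix.diagonal (fun i => (σ i : ℂ)) * Vᴴ with U, V unitary n×n complex matrices and σ i ≥ 0 for all i, let λ ≥ 0, and let D_λ X := U * Matrix.diagonal (fun i => (min (σ i) λ : ℂ)) * Vᴴ be the spectral truncation of X at level λ. Then for every n×n complex matrix Y with spectral norm ‖Y‖₂ ≤ λ, the Frobenius inner product of X − Y with X − D_λX is nonnegative: Re (trace ((X − Y)ᴴ * (X − D_λX))) ≥ 0. -/

import Mathlib

open Matrix

set_option synthInstance.maxHeartbeats 400000

/-- The spectral norm (ℓ²→ℓ² operator norm, i.e. largest singular value) of a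
square complex matrix. -/
noncomputable def spectralNorm' {n : ℕ} (A : Matrix (Fin n) (Fin n) ℂ) : ℝ :=
  ‖Matrix.toEuclideanCLM (𝕜 := ℂ) A‖

lemma col_norm_one {n : ℕ} (U : Matrix (Fin n) (Fin n) ℂ) (hU : Uᴴ * U = 1) (i : Fin n) :
    ‖(WithLp.equiv 2 (Fin n → ℂ)).symm (fun k => U k i)‖ = 1 := by
  have h : (Uᴴ * U) i i = 1 := by rw [hU]; simp [Matrix.one_apply]
  rw [Matrix.mul_apply] at h
  simp only [Matrix.conjTranspose_apply] at h
  have h2 : ∑ k, ‖U k i‖ ^ 2 = 1 := by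
    have := congrArg Complex.re h
    simp only [Complex.re_sum, Complex.one_re] at this
    rw [← this]
    apply Finset.sum_congr rfl
    intro k _
    rw [show (star (U k i) * U k i) = ((‖U k i‖:ℂ))^2 by
      rw [Complex.star_def, Complex.conj_mul']]
    simp [← Complex.ofReal_pow]
  rw [EuclideanSpace.norm_eq]
  simp only [WithLp.equiv_symm_apply, WithLp.ofLp_toLp]
  rw [h2, Real.sqrt_one]

lemma diag_entry_bound {n : ℕ} (U V Y : Matrix (Fin n) (Fin n) ℂ)
    (hU : Uᴴ * U = 1) (hV : Vᴴ * V = 1) (i : Fin n) :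
    ‖(Uᴴ * Y * V) i i‖ ≤ spectralNorm' Y := by
  set u : EuclideanSpace ℂ (Fin n) := (WithLp.equiv 2 (Fin n → ℂ)).symm (fun k => U k i)
  set v : EuclideanSpace ℂ (Fin n) := (WithLp.equiv 2 (Fin n → ℂ)).symm (fun k => V k i)
  have hinner : (Uᴴ * Y * V) i i =
      inner (𝕜 := ℂ) u (Matrix.toEuclideanCLM (𝕜 := ℂ) Y v) := by
    rw [show Matrix.toEuclideanCLM (𝕜 := ℂ) Y v =
        (WithLp.equiv 2 (Fin n → ℂ)).symm (Y *ᵥ fun k => V k i) from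
      Matrix.toEuclideanCLM_toLp Y _]
    simp only [PiLp.inner_apply, u, WithLp.equiv_symm_apply, WithLp.ofLp_toLp, RCLike.inner_apply,
      Matrix.mul_apply, Matrix.conjTranspose_apply, Matrix.mulVec, dotProduct]
    simp only [Finset.sum_mul, Finset.mul_sum]
    rw [Finset.sum_comm]
    apply Finset.sum_congr rfl
    intro k _
    apply Finset.sum_congr rfl
    intro j _
    simp only [Complex.star_def]
    ring
  rw [hinner]
  calc ‖inner (𝕜 := ℂ) u (Matrix.toEuclideanCLM (𝕜 := ℂ) Y v)‖
      ≤ ‖u‖ * ‖Matrix.toEuclideanCLM (𝕜 := ℂ) Y v‖ := norm_inner_le_norm _ _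
    _ ≤ ‖u‖ * (‖Matrix.toEuclideanCLM (𝕜 := ℂ) Y‖ * ‖v‖) := by
        exact mul_le_mul_of_nonneg_left (ContinuousLinearMap.le_opNorm _ _) (norm_nonneg u)
    _ = spectralNorm' Y := by
        rw [col_norm_one U hU i, col_norm_one V hV i]; simp [spectralNorm']

/-- For `X = U * diagonal σ * Vᴴ` with `U, V` unitary and `σ ≥ 0`, and the spectral
truncation `D_λ X = U * diagonal (min (σ i) λ) * Vᴴ`: for every `Y` with `‖Y‖₂ ≤ λ`,
the Frobenius inner product of `X − Y` with `X − D_λ X` is nonnegative. -/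
theorem stmt_9 {n : ℕ} (U V : Matrix (Fin n) (Fin n) ℂ) (σ : Fin n → ℝ)
    (hU : Uᴴ * U = 1) (hV : Vᴴ * V = 1) (hσ : ∀ i, 0 ≤ σ i) (lam : ℝ) (hlam : 0 ≤ lam)
    (X DX : Matrix (Fin n) (Fin n) ℂ)
    (hX : X = U * Matrix.diagonal (fun i => (σ i : ℂ)) * Vᴴ)
    (hDX : DX = U * Matrix.diagonal (fun i => ((min (σ i) lam : ℝ) : ℂ)) * Vᴴ) :
    ∀ Y : Matrix (Fin n) (Fin n) ℂ, spectralNorm' Y ≤ lam →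
      0 ≤ (Matrix.trace ((X - Y)ᴴ * (X - DX))).re := by
  intro Y hY
  set d : Fin n → ℝ := fun i => σ i - min (σ i) lam with hd
  set M : Matrix (Fin n) (Fin n) ℂ := Uᴴ * Y * V with hM
  have hdiag : Matrix.diagonal (fun i => ((σ i : ℝ) : ℂ)) -
      Matrix.diagonal (fun i => ((min (σ i) lam : ℝ) : ℂ)) =
      Matrix.diagonal (fun i => (d i : ℂ)) := by
    ext i j
    by_cases h : i = j <;> simp [Matrix.diagonal, h, hd]
  have hdiff : X - DX = U * Matrix.diagonal (fun i => (d i : ℂ)) * Vᴴ := by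
    rw [hX, hDX, ← Matrix.sub_mul, ← Matrix.mul_sub, hdiag]
  have htr : Matrix.trace ((X - Y)ᴴ * (X - DX)) =
      ∑ i, ((σ i : ℂ) - star (M i i)) * (d i : ℂ) := by
    rw [hdiff, Matrix.conjTranspose_sub, Matrix.sub_mul, Matrix.trace_sub]
    have h1 : Matrix.trace (Xᴴ * (U * Matrix.diagonal (fun i => (d i : ℂ)) * Vᴴ)) =
        ∑ i, (σ i : ℂ) * (d i : ℂ) := by
      rw [hX]
      rw [show (U * Matrix.diagonal (fun i => (σ i : ℂ)) * Vᴴ)ᴴ *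
          (U * Matrix.diagonal (fun i => (d i : ℂ)) * Vᴴ) =
          V * ((Matrix.diagonal (fun i => (σ i : ℂ)))ᴴ * (Uᴴ * U) *
            Matrix.diagonal (fun i => (d i : ℂ))) * Vᴴ by
        simp only [Matrix.conjTranspose_mul, Matrix.conjTranspose_conjTranspose]
        noncomm_ring]
      rw [Matrix.trace_mul_cycle, ← Matrix.mul_assoc, hV, Matrix.one_mul, hU,
        Matrix.mul_one, Matrix.diagonal_conjTranspose, Matrix.diagonal_mul_diagonal,
        Matrix.trace_diagonal]
      apply Finset.sum_congr rfl
      intro i _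
      simp [Pi.star_apply, Complex.star_def, Complex.conj_ofReal]
    have h2 : Matrix.trace (Yᴴ * (U * Matrix.diagonal (fun i => (d i : ℂ)) * Vᴴ)) =
        ∑ i, star (M i i) * (d i : ℂ) := by
      rw [show Yᴴ * (U * Matrix.diagonal (fun i => (d i : ℂ)) * Vᴴ) =
          (Yᴴ * U) * Matrix.diagonal (fun i => (d i : ℂ)) * Vᴴ by noncomm_ring]
      rw [Matrix.trace_mul_cycle, ← Matrix.mul_assoc]
      have : Vᴴ * Yᴴ * U = Mᴴ := by
        rw [hM]
        simp only [Matrix.conjTranspose_mul, Matrix.conjTranspose_conjTranspose]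
        noncomm_ring
      rw [this, Matrix.trace]
      apply Finset.sum_congr rfl
      intro i _
      simp [Matrix.diag, Matrix.mul_apply, Matrix.diagonal, Matrix.conjTranspose_apply,
        Finset.sum_ite_eq]
    rw [h1, h2, ← Finset.sum_sub_distrib]
    apply Finset.sum_congr rfl
    intro i _
    ring
  rw [htr, Complex.re_sum]
  apply Finset.sum_nonneg
  intro i _
  have hterm : (((σ i : ℂ) - star (M i i)) * (d i : ℂ)).re =
      (σ i - (M i i).re) * d i := by
    simp [Complex.sub_re, Complex.mul_re, Complex.ofReal_re, Complex.ofReal_im,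
      Complex.star_def]
  rw [hterm]
  rcases le_or_gt (σ i) lam with hle | hlt
  · have : d i = 0 := by simp [hd, min_eq_left hle]
    rw [this, mul_zero]
  · have hdpos : 0 ≤ d i := by simp [hd, min_eq_right hlt.le, sub_nonneg, hlt.le]
    apply mul_nonneg _ hdpos
    have hb : ‖M i i‖ ≤ lam := le_trans (diag_entry_bound U V Y hU hV i) hY
    have : (M i i).re ≤ lam := le_trans (Complex.re_le_norm _) hb
    linarith
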